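/- With the setup of a parallel system of m linear limit states in standard normal space, the second moment of the conditional failure probability satisfies E[P(F_par | U_v)²] = Φ_{2m}(−[B; B]; [[R, R_v],[R_v, R]]), where F_par = ∩_{i=1}^m {αᵢᵀU ≥ βᵢ}, R = AAᵀ, R_v = A_v A_vᵀ, and Φ_{2m}(·; Σ) is the 2m-variate normal CDF with mean zero and covariance Σ. -/

import Mathlib

open MeasureTheory ProbabilityTheory

noncomputable def stdGaussian (ι : Type*) [Fintype ι] : Measure (ι → ℝ) :=
  Measure.pi fun _ => gaussianReal 0 1

private lemma measurable_mulVec' {ι : Type*} [Fintype ι] {κ : Type*} (M : Matrix κ ι ℝ) (i : κ) :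
    Measurable fun u : ι → ℝ => M.mulVec u i := by
  simp only [Matrix.mulVec, dotProduct]
  exact Finset.measurable_sum _ fun j _ => by fun_prop

def Mblock (m n : ℕ) (A : Matrix (Fin m) (Fin n) ℝ) (v : Finset (Fin n)) :
    Matrix (Fin m ⊕ Fin m) (Fin n ⊕ Fin n) ℝ :=
  fun i j => match i, j with
  | .inl i, .inl j => A i j
  | .inl _, .inr _ => 0
  | .inr i, .inl j => if j ∈ v then A i j else 0
  | .inr i, .inr j => if j ∈ v then 0 else A i j

/-- the sub-σ-algebra generated by the coordinates in `v` (not an instance). -/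
private def mVd (n : ℕ) (v : Finset (Fin n)) : MeasurableSpace (Fin n → ℝ) :=
  MeasurableSpace.comap (fun u (j : {x // x ∈ v}) => u j) inferInstance

private theorem stmt11_aux (m n : ℕ) (A : Matrix (Fin m) (Fin n) ℝ)
    (β : Fin m → ℝ) (v : Finset (Fin n)) :
    (∫ u, (((stdGaussian (Fin n))[Set.indicator {u : Fin n → ℝ | ∀ i, β i ≤ A.mulVec u i}
        (fun _ => (1 : ℝ)) | mVd n v]) u) ^ 2 ∂(stdGaussian (Fin n))) =
      ((stdGaussian (Fin n ⊕ Fin n))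
        {w | ∀ i, (Mblock m n A v).mulVec w i
            ≤ Sum.elim (fun k => -β k) (fun k => -β k) i}).toReal := by
  classical
  set μ := stdGaussian (Fin n) with hμ_def
  set Fpar := {u : Fin n → ℝ | ∀ i, β i ≤ A.mulVec u i} with hFpar_def
  have hμprob : IsProbabilityMeasure μ := by
    rw [hμ_def]; unfold _root_.stdGaussian; infer_instance
  -- notation
  let γ : Measure ℝ := gaussianReal 0 1
  let K := {x : Fin n // x ∈ v}
  let Kc := {x : Fin n // ¬ x ∈ v}
  let ρ : Measure (K → ℝ) := Measure.pi fun _ => γ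
  let σm : Measure (Kc → ℝ) := Measure.pi fun _ => γ
  haveI : IsProbabilityMeasure ρ := by unfold ρ γ; infer_instance
  haveI : IsProbabilityMeasure σm := by unfold σm γ; infer_instance
  let e := MeasurableEquiv.piEquivPiSubtypeProd (fun _ : Fin n => ℝ) (fun j => j ∈ v)
  have he : MeasurePreserving e μ (ρ.prod σm) := by
    rw [hμ_def]; unfold _root_.stdGaussian
    unfold ρ σm e γ K Kc
    convert measurePreserving_piEquivPiSubtypeProd (fun _ : Fin n => gaussianReal 0 1)
      (fun j => j ∈ v) using 2 <;> congr!
  let π : (Fin n → ℝ) → (K → ℝ) := fun u j => u j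
  have hπ : Measurable π := measurable_pi_lambda _ fun j => measurable_pi_apply _
  let πc : (Fin n → ℝ) → (Kc → ℝ) := fun u j => u j
  have hπc : Measurable πc := measurable_pi_lambda _ fun j => measurable_pi_apply _
  -- basic measurability
  have hFm : MeasurableSet Fpar := by
    have h : Fpar = ⋂ i, {u : Fin n → ℝ | β i ≤ A.mulVec u i} := by
      ext u; simp [Fpar, Set.mem_iInter]
    rw [h]
    exact MeasurableSet.iInter fun i =>
      measurableSet_le measurable_const (measurable_mulVec' A i)
  set f : (Fin n → ℝ) → ℝ := Fpar.indicator (fun _ => (1 : ℝ)) with hf_def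
  have hfmeas : Measurable f := measurable_const.indicator hFm
  have hfb : ∀ u, ‖f u‖ ≤ 1 := by
    intro u; by_cases h : u ∈ Fpar <;> simp [hf_def, Set.indicator_apply, h]
  have hfint : Integrable f μ := (integrable_const (1 : ℝ)).indicator hFm
  let g' : (K → ℝ) → ℝ := fun x => ∫ y, f (e.symm (x, y)) ∂σm
  have hφm : Measurable fun z : (K → ℝ) × (Kc → ℝ) => f (e.symm z) :=
    hfmeas.comp e.symm.measurable
  have hg'sm : StronglyMeasurable g' :=
    (hφm.stronglyMeasurable).integral_prod_right'
  have hg'b : ∀ x, ‖g' x‖ ≤ 1 := by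
    intro x
    calc ‖∫ y, f (e.symm (x, y)) ∂σm‖ ≤ 1 * (σm Set.univ).toReal :=
          norm_integral_le_of_norm_le_const (Filter.Eventually.of_forall fun y => hfb _)
      _ = 1 := by simp
  let g : (Fin n → ℝ) → ℝ := fun u => g' (π u)
  -- pushforward of μ along π is ρ
  have hπmap : Measure.map π μ = ρ := by
    have h1 : Measure.map π μ = Measure.map Prod.fst (Measure.map e μ) := by
      rw [Measure.map_map measurable_fst e.measurable]; rfl
    rw [h1, he.map_eq, Measure.map_fst_prod]; simp
  have hπint : ∀ (h : (K → ℝ) → ℝ), AEStronglyMeasurable h ρ →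
      ∫ u, h (π u) ∂μ = ∫ x, h x ∂ρ := by
    intro h hh
    rw [← hπmap] at hh ⊢
    exact (integral_map hπ.aemeasurable hh).symm
  -- conditional expectation identification
  have hm : mVd n v ≤ MeasurableSpace.pi := hπ.comap_le
  have hπmV : Measurable[mVd n v] π := Measurable.of_comap_le le_rfl
  have hgmV : StronglyMeasurable[mVd n v] g := hg'sm.comp_measurable hπmV
  have hgmeas : Measurable g := hg'sm.measurable.comp hπ
  have hgint : Integrable g μ :=
    Integrable.mono' (integrable_const 1) hgmeas.aestronglyMeasurable
      (Filter.Eventually.of_forall fun u => hg'b _)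
  haveI : SigmaFinite (μ.trim hm) := by
    have : IsFiniteMeasure (μ.trim hm) := isFiniteMeasure_trim hm
    infer_instance
  have hcond : g =ᵐ[μ] μ[f|mVd n v] := by
    refine ae_eq_condExp_of_forall_setIntegral_eq hm hfint
      (fun s _ _ => hgint.integrableOn) ?_ hgmV.aestronglyMeasurable
    rintro s ⟨t, ht, rfl⟩ -
    -- LHS: ∫ over π ⁻¹' t of g
    have hL : ∫ u in π ⁻¹' t, g u ∂μ = ∫ x in t, g' x ∂ρ := by
      rw [← integral_indicator (hπ ht), ← integral_indicator ht]
      have hpt : ∀ u, (π ⁻¹' t).indicator g u = (t.indicator g') (π u) := by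
        intro u
        by_cases h : π u ∈ t <;> simp [Set.indicator_apply, h, g]
      rw [integral_congr_ae (Filter.Eventually.of_forall hpt)]
      exact hπint _ (hg'sm.indicator ht).aestronglyMeasurable
    have hR : ∫ u in π ⁻¹' t, f u ∂μ = ∫ x in t, g' x ∂ρ := by
      have hfe : ∀ u, (π ⁻¹' t).indicator f u
          = ((t ×ˢ (Set.univ : Set (Kc → ℝ))).indicator (fun z => f (e.symm z))) (e u) := by
        intro u
        by_cases h : π u ∈ t <;>
          simp [Set.indicator_apply, h, e.symm_apply_apply, Set.mem_prod,
            show (e u).1 = π u from rfl]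
      have hfeint : Integrable (fun z : (K → ℝ) × (Kc → ℝ) => f (e.symm z)) (ρ.prod σm) :=
        Integrable.mono' (integrable_const 1) hφm.aestronglyMeasurable
          (Filter.Eventually.of_forall fun z => hfb _)
      rw [← integral_indicator (hπ ht)]
      rw [integral_congr_ae (Filter.Eventually.of_forall hfe)]
      rw [he.integral_comp e.measurableEmbedding]
      rw [integral_indicator (ht.prod MeasurableSet.univ)]
      rw [setIntegral_prod _ hfeint.integrableOn]
      simp only [Measure.restrict_univ]
      rfl
    rw [hL, hR]
  -- LHS equals measure of T
  let T : Set ((K → ℝ) × ((Kc → ℝ) × (Kc → ℝ))) :=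
    {z | e.symm (z.1, z.2.1) ∈ Fpar ∧ e.symm (z.1, z.2.2) ∈ Fpar}
  have hTmaps1 : Measurable fun z : (K → ℝ) × ((Kc → ℝ) × (Kc → ℝ)) => e.symm (z.1, z.2.1) :=
    e.symm.measurable.comp (measurable_fst.prodMk (measurable_fst.comp measurable_snd))
  have hTmaps2 : Measurable fun z : (K → ℝ) × ((Kc → ℝ) × (Kc → ℝ)) => e.symm (z.1, z.2.2) :=
    e.symm.measurable.comp (measurable_fst.prodMk (measurable_snd.comp measurable_snd))
  have hT : MeasurableSet T := (hTmaps1 hFm).inter (hTmaps2 hFm)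
  have hLHS : (∫ u, ((μ[f|mVd n v]) u) ^ 2 ∂μ) = ((ρ.prod (σm.prod σm)) T).toReal := by
    have h0 : (∫ u, ((μ[f|mVd n v]) u) ^ 2 ∂μ) = ∫ u, (g u) ^ 2 ∂μ := by
      refine integral_congr_ae ?_
      filter_upwards [hcond] with u hu
      rw [hu]
    have h1 : ∫ u, (g u) ^ 2 ∂μ = ∫ x, (g' x) ^ 2 ∂ρ :=
      hπint _ ((hg'sm.measurable.pow_const 2).aestronglyMeasurable)
    have hsq : ∀ x, (g' x) ^ 2
        = ∫ w, f (e.symm (x, w.1)) * f (e.symm (x, w.2)) ∂(σm.prod σm) := by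
      intro x
      rw [sq]
      exact (integral_prod_mul (fun y => f (e.symm (x, y))) (fun y => f (e.symm (x, y)))).symm
    have hΦm : Measurable fun z : (K → ℝ) × ((Kc → ℝ) × (Kc → ℝ)) =>
        f (e.symm (z.1, z.2.1)) * f (e.symm (z.1, z.2.2)) :=
      (hfmeas.comp hTmaps1).mul (hfmeas.comp hTmaps2)
    have hΦint : Integrable (fun z : (K → ℝ) × ((Kc → ℝ) × (Kc → ℝ)) =>
        f (e.symm (z.1, z.2.1)) * f (e.symm (z.1, z.2.2))) (ρ.prod (σm.prod σm)) := by
      refine Integrable.mono' (integrable_const 1) hΦm.aestronglyMeasurable ?_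
      refine Filter.Eventually.of_forall fun z => ?_
      calc ‖f (e.symm (z.1, z.2.1)) * f (e.symm (z.1, z.2.2))‖
          = ‖f (e.symm (z.1, z.2.1))‖ * ‖f (e.symm (z.1, z.2.2))‖ := norm_mul _ _
        _ ≤ 1 * 1 := mul_le_mul (hfb _) (hfb _) (norm_nonneg _) zero_le_one
        _ = 1 := one_mul 1
    have h2 : ∫ x, (g' x) ^ 2 ∂ρ = ∫ z, f (e.symm (z.1, z.2.1)) * f (e.symm (z.1, z.2.2))
        ∂(ρ.prod (σm.prod σm)) := by
      rw [integral_prod _ hΦint]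
      exact integral_congr_ae (Filter.Eventually.of_forall fun x => hsq x)
    have h3 : ∀ z : (K → ℝ) × ((Kc → ℝ) × (Kc → ℝ)),
        f (e.symm (z.1, z.2.1)) * f (e.symm (z.1, z.2.2)) = T.indicator 1 z := by
      intro z
      by_cases h1' : e.symm (z.1, z.2.1) ∈ Fpar <;>
        by_cases h2' : e.symm (z.1, z.2.2) ∈ Fpar <;>
          simp [hf_def, Set.indicator_apply, h1', h2', T]
    rw [h0, h1, h2, integral_congr_ae (Filter.Eventually.of_forall h3),
      integral_indicator_one hT]
    rfl
  -- RHS equals the same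
  have hRHS : ((stdGaussian (Fin n ⊕ Fin n))
      {w | ∀ i, (Mblock m n A v).mulVec w i
          ≤ Sum.elim (fun k => -β k) (fun k => -β k) i}).toReal
      = ((ρ.prod (σm.prod σm)) T).toReal := by
    set ν2 := stdGaussian (Fin n ⊕ Fin n) with hν2
    haveI : IsProbabilityMeasure ν2 := by rw [hν2]; unfold _root_.stdGaussian; infer_instance
    have hSm : MeasurableSet {w : (Fin n ⊕ Fin n) → ℝ | ∀ i, (Mblock m n A v).mulVec w i
        ≤ Sum.elim (fun k => -β k) (fun k => -β k) i} := by
      have h : {w : (Fin n ⊕ Fin n) → ℝ | ∀ i, (Mblock m n A v).mulVec w i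
          ≤ Sum.elim (fun k => -β k) (fun k => -β k) i}
          = ⋂ i, {w | (Mblock m n A v).mulVec w i
              ≤ Sum.elim (fun k => -β k) (fun k => -β k) i} := by
        ext w; simp [Set.mem_iInter]
      rw [h]
      exact MeasurableSet.iInter fun i =>
        measurableSet_le (measurable_mulVec' _ i) measurable_const
    have hS2m : MeasurableSet {w : (Fin n ⊕ Fin n) → ℝ |
        ∀ i, Sum.elim β β i ≤ (Mblock m n A v).mulVec w i} := by
      have h : {w : (Fin n ⊕ Fin n) → ℝ | ∀ i, Sum.elim β β i ≤ (Mblock m n A v).mulVec w i}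
          = ⋂ i, {w | Sum.elim β β i ≤ (Mblock m n A v).mulVec w i} := by
        ext w; simp [Set.mem_iInter]
      rw [h]
      exact MeasurableSet.iInter fun i =>
        measurableSet_le measurable_const (measurable_mulVec' _ i)
    -- symmetry under negation
    have hneg : MeasurePreserving (fun w : (Fin n ⊕ Fin n) → ℝ => -w) ν2 ν2 := by
      rw [hν2]; unfold _root_.stdGaussian
      have h1 : MeasurePreserving (fun x : ℝ => -x) (gaussianReal 0 1) (gaussianReal 0 1) := by
        refine ⟨measurable_neg, ?_⟩
        have h := gaussianReal_map_const_mul (μ := 0) (v := 1) (-1)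
        simp only [neg_one_mul] at h
        simpa using h
      exact measurePreserving_pi _ _ (fun _ => h1)
    have hpre1 : (fun w : (Fin n ⊕ Fin n) → ℝ => -w) ⁻¹'
        {w | ∀ i, (Mblock m n A v).mulVec w i
          ≤ Sum.elim (fun k => -β k) (fun k => -β k) i}
        = {w | ∀ i, Sum.elim β β i ≤ (Mblock m n A v).mulVec w i} := by
      ext w
      simp only [Set.mem_preimage, Set.mem_setOf_eq, Matrix.mulVec_neg, Pi.neg_apply]
      refine forall_congr' fun i => ?_
      cases i <;> simp [neg_le_neg_iff]
    have step1 : ν2 {w | ∀ i, (Mblock m n A v).mulVec w i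
        ≤ Sum.elim (fun k => -β k) (fun k => -β k) i}
        = ν2 {w | ∀ i, Sum.elim β β i ≤ (Mblock m n A v).mulVec w i} := by
      conv_lhs => rw [← hneg.measure_preimage hSm.nullMeasurableSet]
      rw [hpre1]
    -- split the double copy
    let es := MeasurableEquiv.sumPiEquivProdPi (fun _ : Fin n ⊕ Fin n => ℝ)
    have hes : MeasurePreserving es.symm (μ.prod μ) ν2 := by
      rw [hν2, hμ_def]; unfold _root_.stdGaussian
      exact measurePreserving_sumPiEquivProdPi_symm (fun _ => gaussianReal 0 1)
    let E : Set ((Fin n → ℝ) × (Fin n → ℝ)) :=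
      {z | z.1 ∈ Fpar ∧ e.symm (π z.1, πc z.2) ∈ Fpar}
    have hEm : MeasurableSet E := by
      refine MeasurableSet.inter (measurable_fst hFm) ?_
      exact (e.symm.measurable.comp
        ((hπ.comp measurable_fst).prodMk (hπc.comp measurable_snd))) hFm
    have hpre2 : es.symm ⁻¹'
        {w | ∀ i, Sum.elim β β i ≤ (Mblock m n A v).mulVec w i} = E := by
      ext z
      simp only [Set.mem_preimage, Set.mem_setOf_eq]
      have h1 : ∀ a : Fin m, (Mblock m n A v).mulVec (es.symm z) (Sum.inl a)
          = A.mulVec z.1 a := by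
        intro a
        simp only [Matrix.mulVec, dotProduct, Fintype.sum_sum_type]
        have hl : ∀ j : Fin n, es.symm z (Sum.inl j) = z.1 j := fun _ => rfl
        simp [Mblock, hl]
      have h2 : ∀ a : Fin m, (Mblock m n A v).mulVec (es.symm z) (Sum.inr a)
          = A.mulVec (e.symm (π z.1, πc z.2)) a := by
        intro a
        simp only [Matrix.mulVec, dotProduct, Fintype.sum_sum_type]
        rw [← Finset.sum_add_distrib]
        refine Finset.sum_congr rfl fun j _ => ?_
        have hl : es.symm z (Sum.inl j) = z.1 j := rfl
        have hr : es.symm z (Sum.inr j) = z.2 j := rfl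
        have hc : e.symm (π z.1, πc z.2) j
            = if h : j ∈ v then z.1 j else z.2 j := by
          by_cases h : j ∈ v <;>
            simp only [show e.symm (π z.1, πc z.2) j
              = if h : j ∈ v then (π z.1) ⟨j, h⟩ else (πc z.2) ⟨j, h⟩ from rfl,
              dif_pos, dif_neg, h] <;> rfl
        by_cases h : j ∈ v <;> simp [Mblock, h, hl, hr, hc]
      rw [Sum.forall]
      simp only [Sum.elim_inl, Sum.elim_inr, h1, h2]
      exact Iff.rfl
    have step2 : ν2 {w | ∀ i, Sum.elim β β i ≤ (Mblock m n A v).mulVec w i}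
        = (μ.prod μ) E := by
      rw [← hpre2]
      exact (hes.measure_preimage hS2m.nullMeasurableSet).symm
    -- transfer to the (ρ, σm) coordinates
    have hesymm : MeasurePreserving e.symm (ρ.prod σm) μ := MeasurePreserving.symm e he
    have heprod : MeasurePreserving (Prod.map e.symm e.symm)
        ((ρ.prod σm).prod (ρ.prod σm)) (μ.prod μ) := hesymm.prod hesymm
    let q : ((K → ℝ) × (Kc → ℝ)) × ((K → ℝ) × (Kc → ℝ)) → (K → ℝ) × ((Kc → ℝ) × (Kc → ℝ)) :=
      fun zw => (zw.1.1, (zw.1.2, zw.2.2))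
    have hpre3 : (Prod.map e.symm e.symm) ⁻¹' E = q ⁻¹' T := by
      ext zw
      have ha : π (e.symm zw.1) = zw.1.1 := by
        funext j
        rw [show π (e.symm zw.1) j = e.symm zw.1 ↑j from rfl,
          show e.symm zw.1 (↑j : Fin n)
            = if h : (↑j : Fin n) ∈ v then zw.1.1 ⟨↑j, h⟩ else zw.1.2 ⟨↑j, h⟩ from rfl,
          dif_pos j.2]
      have hb : πc (e.symm zw.2) = zw.2.2 := by
        funext j
        rw [show πc (e.symm zw.2) j = e.symm zw.2 ↑j from rfl,
          show e.symm zw.2 (↑j : Fin n)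
            = if h : (↑j : Fin n) ∈ v then zw.2.1 ⟨↑j, h⟩ else zw.2.2 ⟨↑j, h⟩ from rfl,
          dif_neg j.2]
      show (e.symm zw.1 ∈ Fpar ∧ e.symm (π (e.symm zw.1), πc (e.symm zw.2)) ∈ Fpar) ↔ _
      rw [ha, hb]
      exact Iff.rfl
    have hq : MeasurePreserving q ((ρ.prod σm).prod (ρ.prod σm)) (ρ.prod (σm.prod σm)) := by
      have hsnd : MeasurePreserving (Prod.snd) (ρ.prod σm) σm := by
        refine ⟨measurable_snd, ?_⟩
        rw [Measure.map_snd_prod]; simp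
      have h1 : MeasurePreserving (Prod.map (id : (K → ℝ) × (Kc → ℝ) → (K → ℝ) × (Kc → ℝ))
          Prod.snd) ((ρ.prod σm).prod (ρ.prod σm)) ((ρ.prod σm).prod σm) :=
        (MeasurePreserving.id _).prod hsnd
      have h2 := measurePreserving_prodAssoc ρ σm σm
      exact h2.comp h1
    have step3 : (μ.prod μ) E = (ρ.prod (σm.prod σm)) T := by
      rw [← heprod.measure_preimage hEm.nullMeasurableSet, hpre3]
      exact hq.measure_preimage hT.nullMeasurableSet
    rw [step1, step2, step3]
  rw [hLHS, hRHS]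

/-- Pick-freeze identity for the parallel system `F_par = ∩ᵢ {αᵢᵀU ≥ βᵢ}`:
`E[P(F_par | U_v)²] = Φ_{2m}(−[B; B]; [[R, R_v], [R_v, R]])`. -/
theorem stmt11 (m n : ℕ) (A : Matrix (Fin m) (Fin n) ℝ) (hA : ∀ i, ∑ j, (A i j) ^ 2 = 1)
    (β : Fin m → ℝ) (v : Finset (Fin n)) :
    let μ := stdGaussian (Fin n)
    let Fpar := {u : Fin n → ℝ | ∀ i, β i ≤ A.mulVec u i}
    let mV : MeasurableSpace (Fin n → ℝ) :=
      MeasurableSpace.comap (fun u (j : {x // x ∈ v}) => u j) inferInstance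
    (∫ u, ((μ[Fpar.indicator (fun _ => (1 : ℝ)) | mV]) u) ^ 2 ∂μ) =
      ((stdGaussian (Fin n ⊕ Fin n))
        {w | ∀ i, (Mblock m n A v).mulVec w i
            ≤ Sum.elim (fun k => -β k) (fun k => -β k) i}).toReal :=
  stmt11_aux m n A β v
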